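/- Let ι be a type, S a finite set of indices, M ⊆ S, and let o, o' : ι → ℝ be functions with o i ≥ 0 and o' i ≥ 0 for all i ∈ S. Let 0 < γ₀ < 1 and 0 < θ₀ < 1. Assume: (i) ∑_{i ∈ M} (o i)² ≥ θ₀² · ∑_{i ∈ S} (o i)² (Dörfler marking); (ii) o' i ≤ γ₀ · o i for every i ∈ M; (iii) o' i ≤ o i for every i ∈ S \ M. Then ∑_{i ∈ S} (o' i)² ≤ (1 - (1 - γ₀²)·θ₀²) · ∑_{i ∈ S} (o i)², i.e., the new total oscillation satisfies (∑_{S} (o')²)^{1/2} ≤ ζ · (∑_{S} o²)^{1/2} with ζ = √(1 - (1 - γ₀²)θ₀²). -/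
import Mathlib

/-- Oscillation reduction: Dörfler marking for the oscillation together with a
size reduction factor `γ₀` on marked elements reduces the total (squared)
oscillation by the factor `1 - (1 - γ₀²)·θ₀²`. -/
theorem oscillation_reduction
    {ι : Type*} [DecidableEq ι] (S M : Finset ι) (hMS : M ⊆ S)
    (o o' : ι → ℝ)
    (ho : ∀ i ∈ S, 0 ≤ o i) (ho' : ∀ i ∈ S, 0 ≤ o' i)
    (γ₀ θ₀ : ℝ) (hγ₀0 : 0 < γ₀) (hγ₀1 : γ₀ < 1) (hθ₀0 : 0 < θ₀) (hθ₀1 : θ₀ < 1)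
    (hmark : θ₀ ^ 2 * ∑ i ∈ S, (o i) ^ 2 ≤ ∑ i ∈ M, (o i) ^ 2)
    (hred : ∀ i ∈ M, o' i ≤ γ₀ * o i)
    (hmono : ∀ i ∈ S \ M, o' i ≤ o i) :
    ∑ i ∈ S, (o' i) ^ 2 ≤ (1 - (1 - γ₀ ^ 2) * θ₀ ^ 2) * ∑ i ∈ S, (o i) ^ 2 := by
  have hsplit : ∀ f : ι → ℝ, ∑ i ∈ S, f i = ∑ i ∈ M, f i + ∑ i ∈ S \ M, f i := by
    intro f
    rw [← Finset.sum_union Finset.disjoint_sdiff, Finset.union_sdiff_of_subset hMS]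
  have h1 : ∑ i ∈ M, (o' i) ^ 2 ≤ γ₀ ^ 2 * ∑ i ∈ M, (o i) ^ 2 := by
    rw [Finset.mul_sum]
    refine Finset.sum_le_sum fun i hi => ?_
    have := hred i hi
    have h0 := ho' i (hMS hi)
    calc (o' i) ^ 2 ≤ (γ₀ * o i) ^ 2 := by
          apply pow_le_pow_left₀ h0 this
      _ = γ₀ ^ 2 * (o i) ^ 2 := by ring
  have h2 : ∑ i ∈ S \ M, (o' i) ^ 2 ≤ ∑ i ∈ S \ M, (o i) ^ 2 := by
    refine Finset.sum_le_sum fun i hi => ?_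
    exact pow_le_pow_left₀ (ho' i (Finset.mem_sdiff.mp hi).1) (hmono i hi) 2
  have key : ∑ i ∈ S, (o' i) ^ 2 ≤ ∑ i ∈ S, (o i) ^ 2 - (1 - γ₀ ^ 2) * ∑ i ∈ M, (o i) ^ 2 := by
    rw [hsplit (fun i => (o' i) ^ 2), hsplit (fun i => (o i) ^ 2)]
    nlinarith [h1, h2]
  have hγsq : 1 - γ₀ ^ 2 ≥ 0 := by nlinarith
  nlinarith [mul_le_mul_of_nonneg_left hmark hγsq]
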